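/- For every countable ordinal α ≥ 2, the ideal conv_{α+1} on ω^{α+1}+1 is isomorphic to the ideal (Fin ⊗ Fin(ω^α+1)) ∩ ({∅} ⊗ conv_α) on ω × (ω^α+1). -/

import Mathlib

open Set Filter Topology Ordinal

noncomputable section

/-- The derived set of `A`: the set of accumulation (limit) points of `A`. -/
def derivSet {X : Type*} [TopologicalSpace X] (A : Set X) : Set X :=
  {p | p ∈ closure (A \ {p})}

/-- The ordinal space `ω^a + 1 = [0, ω^a]` with the (order) topology. -/
abbrev OrdSpace (a : Ordinal) : Type _ := ↥(Set.Iic (omega0 ^ a))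

/-- The ideal `conv_a` on `ω^a + 1`: sets with finite derived set. -/
def convIdeal (a : Ordinal) : Set (Set (OrdSpace a)) :=
  {A | (derivSet A).Finite}

/-- `I` is an ideal of subsets. -/
structure IsIdeal {S : Type*} (I : Set (Set S)) : Prop where
  empty_mem : ∅ ∈ I
  subset_mem : ∀ {A B : Set S}, A ⊆ B → B ∈ I → A ∈ I
  union_mem : ∀ {A B : Set S}, A ∈ I → B ∈ I → A ∪ B ∈ I

/-- The subsequence of `f` indexed by `A` converges to `x`. -/
def ConvAlong {X : Type*} [TopologicalSpace X] (f : ℕ → X) (A : Set ℕ) (x : X) : Prop :=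
  ∀ U ∈ nhds x, {n ∈ A | f n ∉ U}.Finite

/-- Katětov order: `J ≤_K I`, where `I` lives on `X` and `J` on `Y`. -/
def KatetovLE {X Y : Type*} (J : Set (Set Y)) (I : Set (Set X)) : Prop :=
  ∃ f : X → Y, ∀ A ∈ J, f ⁻¹' A ∈ I

/-- `X ∈ FinBW(I)`: every sequence in `X` has a convergent subsequence indexed
by an `I`-positive set. -/
def InFinBW (I : Set (Set ℕ)) (X : Type*) [TopologicalSpace X] : Prop :=
  ∀ f : ℕ → X, ∃ A : Set ℕ, A ∉ I ∧ ∃ x : X, ConvAlong f A x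

namespace Stmt5Aux

theorem mem_derivSet {X : Type*} [TopologicalSpace X] {A : Set X} {p : X} :
    p ∈ derivSet A ↔ AccPt p (𝓟 A) := by
  rw [accPt_principal_iff_clusterPt, ← mem_closure_iff_clusterPt]; rfl

theorem accPt_val_iff {X : Type*} [TopologicalSpace X] {s : Set X} {S : Set s} {x : s} :
    AccPt (x : X) (𝓟 (Subtype.val '' S)) ↔ AccPt x (𝓟 S) := by
  rw [accPt_iff_nhds, accPt_iff_nhds]
  constructor
  · intro h U hU
    obtain ⟨V, hV, hVU⟩ := (mem_nhds_subtype _ _ _).1 hU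
    obtain ⟨y, ⟨hyV, hyS⟩, hyx⟩ := h V hV
    obtain ⟨z, hzS, rfl⟩ := hyS
    exact ⟨z, ⟨hVU hyV, hzS⟩, fun e => hyx (congrArg Subtype.val e)⟩
  · intro h U hU
    have h' : (Subtype.val : s → X) ⁻¹' U ∈ nhds x :=
      (mem_nhds_subtype _ _ _).2 ⟨U, hU, subset_rfl⟩
    obtain ⟨z, ⟨hzU, hzS⟩, hzx⟩ := h _ h'
    exact ⟨z, ⟨hzU, mem_image_of_mem _ hzS⟩, fun e => hzx (Subtype.ext e)⟩

theorem accSet_eq {c : Ordinal} (S : Set ↥(Iic c)) :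
    {q : Ordinal | AccPt q (𝓟 (Subtype.val '' S))} = Subtype.val '' derivSet S := by
  ext q
  constructor
  · intro hq
    have hqc : q ∈ Iic c := by
      have h1 : q ∈ closure (Subtype.val '' S) := mem_closure_iff_clusterPt.2 (hq.clusterPt)
      have h2 : closure (Subtype.val '' S) ⊆ Iic c :=
        closure_minimal (by rintro _ ⟨y, -, rfl⟩; exact y.2) isClosed_Iic
      exact h2 h1
    exact ⟨⟨q, hqc⟩, mem_derivSet.2 (accPt_val_iff.1 hq), rfl⟩
  · rintro ⟨p, hp, rfl⟩
    exact accPt_val_iff.2 (mem_derivSet.1 hp)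

theorem derivSet_finite_iff {c : Ordinal} {S : Set ↥(Iic c)} :
    (derivSet S).Finite ↔ {q : Ordinal | AccPt q (𝓟 (Subtype.val '' S))}.Finite := by
  rw [accSet_eq]
  exact ⟨fun h => h.image _,
    fun h => Set.Finite.of_finite_image h (Subtype.val_injective.injOn)⟩

theorem not_accPt_of_finite {X : Type*} [TopologicalSpace X] [T1Space X]
    {T : Set X} (h : T.Finite) (p : X) : ¬ AccPt p (𝓟 T) := by
  intro hp
  have h1 : p ∈ closure (T \ {p}) := mem_closure_iff_clusterPt.2 (accPt_principal_iff_clusterPt |>.1 hp)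
  rw [(h.sdiff (t := {p})).isClosed.closure_eq] at h1
  exact h1.2 rfl

theorem acc_le {c : Ordinal} {T : Set Ordinal} (hT : T ⊆ Iic c) {p : Ordinal}
    (hp : AccPt p (𝓟 T)) : p ≤ c := by
  have h1 : p ∈ closure T := mem_closure_iff_clusterPt.2 hp.clusterPt
  have h2 : closure T ⊆ Iic c := closure_minimal hT isClosed_Iic
  exact h2 h1

theorem exists_acc_of_infinite {c : Ordinal} {T : Set Ordinal} (hT : T ⊆ Iic c)
    (h : T.Infinite) : ∃ p ≤ c, AccPt p (𝓟 T) := by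
  have hcomp : IsCompact (Iic c) := by
    have h1 : Icc (0 : Ordinal) c = Iic c := by
      ext x; simp [zero_le]
    rw [← h1]; exact isCompact_Icc
  obtain ⟨x, hx, hacc⟩ := h.exists_accPt_of_subset_isCompact hcomp hT
  exact ⟨x, hx, hacc⟩

end Stmt5Aux

namespace Stmt5Aux

def tau (c y : Ordinal) : Ordinal :=
  if y = c then 0 else if y < omega0 then y + 1 else y

def FF (c : Ordinal) : ℕ → Ordinal → Ordinal
  | 0, y => if y < c then y else c * omega0
  | (k+1), y => c * (k+1) + tau c y

theorem tau_lt {c : Ordinal} (hw : omega0 ≤ c) {y : Ordinal} (hy : y ≤ c) : tau c y < c := by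
  unfold tau
  split_ifs with h1 h2
  · exact omega0_pos.trans_le hw
  · exact lt_of_lt_of_le (isSuccLimit_omega0.succ_lt h2) hw
  · exact lt_of_le_of_ne hy h1

theorem tau_ne_zero {c y : Ordinal} (hy : y ≠ c) : tau c y ≠ 0 := by
  unfold tau
  rw [if_neg hy]
  split_ifs with h2
  · rw [Ordinal.add_one_eq_succ]; exact Ordinal.succ_ne_zero y
  · exact fun h => h2 (h ▸ omega0_pos)

theorem tau_ge {c y : Ordinal} (hy : y < c) : y ≤ tau c y := by
  unfold tau
  rw [if_neg hy.ne]
  split_ifs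
  · exact le_self_add
  · exact le_rfl

theorem tau_le_succ (c y : Ordinal) : tau c y ≤ y + 1 := by
  unfold tau
  split_ifs
  · exact zero_le
  · exact le_rfl
  · exact le_self_add

theorem tau_eq_zero_iff {c y : Ordinal} : tau c y = 0 ↔ y = c := by
  constructor
  · intro h
    by_contra hy
    exact tau_ne_zero hy h
  · intro h
    rw [tau, if_pos h]

theorem tau_inj {c : Ordinal} {y z : Ordinal} (hy : y ≤ c) (hz : z ≤ c)
    (h : tau c y = tau c z) : y = z := by
  by_cases hy' : y = c
  · rw [hy', tau_eq_zero_iff.2 rfl] at h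
    rw [hy', (tau_eq_zero_iff.1 h.symm).symm]
  · by_cases hz' : z = c
    · rw [hz', tau_eq_zero_iff.2 rfl] at h
      rw [hz', ← tau_eq_zero_iff.1 h]
    · rw [tau, tau, if_neg hy', if_neg hz'] at h
      split_ifs at h with h1 h2 h2
      · have h' : Order.succ y = Order.succ z := by
          rwa [Ordinal.add_one_eq_succ, Ordinal.add_one_eq_succ] at h
        exact Order.succ_injective h'
      · have hzo : z < omega0 := by
          rw [← h, Ordinal.add_one_eq_succ]; exact isSuccLimit_omega0.succ_lt h1
        exact absurd hzo h2
      · have hyo : y < omega0 := by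
          rw [h, Ordinal.add_one_eq_succ]; exact isSuccLimit_omega0.succ_lt h2
        exact absurd hyo h1
      · exact h

end Stmt5Aux

namespace Stmt5Aux

variable {c : Ordinal}

theorem c_le_mul_omega0 (hc : 0 < c) : c ≤ c * omega0 := by
  calc c = c * 1 := (mul_one c).symm
    _ ≤ c * omega0 := mul_le_mul_right (Order.one_le_iff_pos.2 omega0_pos) c

theorem mul_nat_succ_le (n : ℕ) : c * (n : Ordinal) + c ≤ c * omega0 := by
  have h1 : c * (n : Ordinal) + c = c * ((n : Ordinal) + 1) := (mul_add_one c _).symm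
  rw [h1]
  refine mul_le_mul_right ?_ c
  have : ((n : Ordinal) + 1) = ((n + 1 : ℕ) : Ordinal) := by push_cast; ring
  rw [this]
  exact (nat_lt_omega0 (n + 1)).le

theorem c_le_mul_nat_succ (k : ℕ) : c ≤ c * ((k+1 : ℕ) : Ordinal) := by
  calc c = c * 1 := (mul_one c).symm
    _ ≤ c * ((k+1 : ℕ) : Ordinal) := by
        refine mul_le_mul_right ?_ c
        exact_mod_cast Nat.one_le_iff_ne_zero.2 (Nat.succ_ne_zero k)

theorem FF_le (hw : omega0 ≤ c) (n : ℕ) {y : Ordinal} (hy : y ≤ c) :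
    FF c n y ≤ c * omega0 := by
  cases n with
  | zero =>
    show (if y < c then y else c * omega0) ≤ c * omega0
    split_ifs with h
    · exact hy.trans (c_le_mul_omega0 (omega0_pos.trans_le hw))
    · exact le_rfl
  | succ k =>
    show c * ((k+1 : ℕ) : Ordinal) + tau c y ≤ c * omega0
    calc c * ((k+1 : ℕ) : Ordinal) + tau c y ≤ c * ((k+1 : ℕ) : Ordinal) + c :=
          add_le_add_right (tau_lt hw hy).le _
      _ ≤ c * omega0 := mul_nat_succ_le (k+1)

theorem FF_bounds (hw : omega0 ≤ c) {y : Ordinal} (hy : y < c) (n : ℕ) :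
    c * (n : Ordinal) + y ≤ FF c n y ∧ FF c n y ≤ c * (n : Ordinal) + (y + 1) := by
  cases n with
  | zero =>
    show c * ((0:ℕ) : Ordinal) + y ≤ (if y < c then y else c * omega0) ∧
      (if y < c then y else c * omega0) ≤ c * ((0:ℕ) : Ordinal) + (y + 1)
    rw [if_pos hy]
    simp only [Nat.cast_zero, mul_zero, zero_add]
    exact ⟨le_rfl, le_self_add⟩
  | succ k =>
    exact ⟨add_le_add_right (tau_ge hy) _, add_le_add_right (tau_le_succ c y) _⟩

theorem FF_loc (hw : omega0 ≤ c) {m n : ℕ} {y z : Ordinal} (hy : y ≤ c)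
    (hz : FF c m y = z) (h1 : c * (n : Ordinal) < z) (h2 : z < c * (n : Ordinal) + c) :
    m = n ∧ y < c ∧ c * (n : Ordinal) + y ≤ z ∧ z ≤ c * (n : Ordinal) + (y + 1) := by
  have hc : 0 < c := omega0_pos.trans_le hw
  cases m with
  | zero =>
    revert hz
    show (if y < c then y else c * omega0) = z → _
    split_ifs with h
    · rintro rfl
      have hn : n = 0 := by
        by_contra hn
        have hcn : c ≤ c * (n : Ordinal) := by
          calc c = c * 1 := (mul_one c).symm
            _ ≤ c * (n : Ordinal) := mul_le_mul_right (by exact_mod_cast Nat.one_le_iff_ne_zero.2 hn) c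
        exact absurd (h1.trans h) (not_lt.2 hcn)
      subst hn
      refine ⟨rfl, h, ?_, ?_⟩
      · simp
      · simp only [Nat.cast_zero, mul_zero, zero_add]
        exact le_self_add
    · rintro rfl
      exact absurd (h2.trans_le (mul_nat_succ_le n)) (lt_irrefl _)
  | succ k =>
    have hz' : c * ((k+1 : ℕ) : Ordinal) + tau c y = z := hz
    clear hz
    have hk1 : c * ((k+1 : ℕ) : Ordinal) ≤ z := hz' ▸ le_self_add
    have hk2 : z < c * ((k+1 : ℕ) : Ordinal) + c := hz' ▸ add_lt_add_right (tau_lt hw hy) _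
    have e1 : k + 1 ≤ n := by
      have h3 : c * ((k+1 : ℕ) : Ordinal) < c * ((n : Ordinal) + 1) := by
        rw [mul_add_one]; exact lt_of_le_of_lt hk1 h2
      have h4 : ((k+1 : ℕ) : Ordinal) < (n : Ordinal) + 1 := (mul_lt_mul_iff_right₀ hc).1 h3
      have h5 : k + 1 < n + 1 := by exact_mod_cast h4
      exact Nat.lt_succ_iff.1 h5
    have e2 : n ≤ k + 1 := by
      have h3 : c * (n : Ordinal) < c * (((k+1 : ℕ) : Ordinal) + 1) := by
        rw [mul_add_one]; exact lt_of_lt_of_le h1 hk2.le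
      have h4 : (n : Ordinal) < ((k+1 : ℕ) : Ordinal) + 1 := (mul_lt_mul_iff_right₀ hc).1 h3
      have h5 : n < k + 1 + 1 := by exact_mod_cast h4
      exact Nat.lt_succ_iff.1 h5
    have hmn : k + 1 = n := le_antisymm e1 e2
    subst hmn
    have hyc : y < c := by
      rcases lt_or_eq_of_le hy with h | rfl
      · exact h
      · rw [tau_eq_zero_iff.2 rfl, add_zero] at hz'
        exact absurd (hz' ▸ h1) (lt_irrefl _)
    refine ⟨rfl, hyc, ?_, ?_⟩
    · exact hz' ▸ add_le_add_right (tau_ge hyc) _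
    · exact hz' ▸ add_le_add_right (tau_le_succ c y) _

end Stmt5Aux

namespace Stmt5Aux

variable {c : Ordinal}

theorem FF_mixed_ne (hw : omega0 ≤ c) {y z : Ordinal} (hy : y ≤ c) (hz : z ≤ c) (k : ℕ) :
    FF c 0 y ≠ FF c (k+1) z := by
  have hc : 0 < c := omega0_pos.trans_le hw
  show (if y < c then y else c * omega0) ≠ c * ((k+1 : ℕ) : Ordinal) + tau c z
  split_ifs with h
  · intro he
    have h1 : c ≤ y := by
      calc c ≤ c * ((k+1 : ℕ) : Ordinal) := c_le_mul_nat_succ k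
        _ ≤ c * ((k+1 : ℕ) : Ordinal) + tau c z := le_self_add
        _ = y := he.symm
    exact absurd h (not_lt.2 h1)
  · intro he
    have h2 : c * ((k+1 : ℕ) : Ordinal) + tau c z < c * omega0 :=
      lt_of_lt_of_le (add_lt_add_right (tau_lt hw hz) _) (mul_nat_succ_le (k+1))
    exact absurd (he ▸ h2) (lt_irrefl _)

theorem FF_succ_mono (hw : omega0 ≤ c) {y z : Ordinal} (hy : y ≤ c) {k l : ℕ} (hkl : k < l) :
    FF c (k+1) y < FF c (l+1) z := by
  show c * ((k+1 : ℕ) : Ordinal) + tau c y < c * ((l+1 : ℕ) : Ordinal) + tau c z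
  have h1 : c * ((k+1 : ℕ) : Ordinal) + tau c y < c * ((k+1 : ℕ) : Ordinal) + c :=
    add_lt_add_right (tau_lt hw hy) _
  have h2 : c * ((k+1 : ℕ) : Ordinal) + c ≤ c * ((l+1 : ℕ) : Ordinal) := by
    rw [mul_add_one c ((k+1 : ℕ) : Ordinal) |>.symm]
    refine mul_le_mul_right ?_ c
    have e : ((k+1 : ℕ) : Ordinal) + 1 = ((k+2 : ℕ) : Ordinal) := by
      push_cast
      rw [add_assoc, one_add_one_eq_two]
    rw [e]
    exact_mod_cast (by omega : k + 2 ≤ l + 1)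
  exact lt_of_lt_of_le (lt_of_lt_of_le h1 h2) (le_self_add)

theorem FF_inj (hw : omega0 ≤ c) {m n : ℕ} {y z : Ordinal} (hy : y ≤ c) (hz : z ≤ c)
    (h : FF c m y = FF c n z) : m = n ∧ y = z := by
  have hc : 0 < c := omega0_pos.trans_le hw
  cases m with
  | zero =>
    cases n with
    | zero =>
      revert h
      show (if y < c then y else c * omega0) = (if z < c then z else c * omega0) → _
      split_ifs with h1 h2 h2
      · exact fun h => ⟨rfl, h⟩
      · intro h
        exact absurd (h ▸ h1) (not_lt.2 (c_le_mul_omega0 hc))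
      · intro h
        exact absurd (h ▸ h2) (not_lt.2 (c_le_mul_omega0 hc))
      · exact fun _ => ⟨rfl, (le_antisymm hy (not_lt.1 h1)).trans (le_antisymm (not_lt.1 h2) hz)⟩
    | succ k => exact absurd h (FF_mixed_ne hw hy hz k)
  | succ k =>
    cases n with
    | zero => exact absurd h.symm (FF_mixed_ne hw hz hy k)
    | succ l =>
      have hkl : k = l := by
        rcases lt_trichotomy k l with h' | h' | h'
        · exact absurd h (FF_succ_mono hw hy h').ne
        · exact h'
        · exact absurd h.symm (FF_succ_mono hw hz h').ne
      subst hkl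
      have h' : c * ((k+1 : ℕ) : Ordinal) + tau c y = c * ((k+1 : ℕ) : Ordinal) + tau c z := h
      have h'' : tau c y = tau c z := by
        apply le_antisymm
        · exact (add_le_add_iff_left _).1 h'.le
        · exact (add_le_add_iff_left _).1 h'.ge
      exact ⟨rfl, tau_inj hy hz h''⟩

theorem tau_surj (hw : omega0 ≤ c) {r : Ordinal} (hr : r < c) :
    ∃ y ≤ c, tau c y = r := by
  rcases eq_or_ne r 0 with rfl | hr0
  · exact ⟨c, le_rfl, tau_eq_zero_iff.2 rfl⟩
  · by_cases hro : r < omega0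
    · obtain ⟨i, rfl⟩ := lt_omega0.1 hro
      obtain ⟨j, rfl⟩ : ∃ j, i = j + 1 := by
        cases i with
        | zero => exact absurd rfl (by exact_mod_cast hr0)
        | succ j => exact ⟨j, rfl⟩
      refine ⟨(j : Ordinal), ((nat_lt_omega0 j).trans_le hw).le, ?_⟩
      rw [tau, if_neg ((nat_lt_omega0 j).trans_le hw).ne, if_pos (nat_lt_omega0 j)]
      push_cast
      ring
    · exact ⟨r, hr.le, by rw [tau, if_neg hr.ne, if_neg hro]⟩

theorem FF_surj (hw : omega0 ≤ c) {z : Ordinal} (hz : z ≤ c * omega0) :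
    ∃ (n : ℕ) (y : Ordinal), y ≤ c ∧ FF c n y = z := by
  have hc : 0 < c := omega0_pos.trans_le hw
  rcases eq_or_lt_of_le hz with rfl | hzlt
  · exact ⟨0, c, le_rfl, by show (if c < c then c else c * omega0) = _; rw [if_neg (lt_irrefl c)]⟩
  · by_cases hzc : z < c
    · exact ⟨0, z, hzc.le, by show (if z < c then z else c * omega0) = z; rw [if_pos hzc]⟩
    · have hr : z % c < c := mod_lt z hc.ne'
      have hdm : c * (z / c) + z % c = z := div_add_mod z c
      have hq : z / c < omega0 := (div_lt hc.ne').2 hzlt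
      obtain ⟨k, hk⟩ := lt_omega0.1 hq
      obtain ⟨j, rfl⟩ : ∃ j, k = j + 1 := by
        cases k with
        | zero =>
          exfalso
          rw [hk, Nat.cast_zero, mul_zero, zero_add] at hdm
          exact hzc (hdm ▸ hr)
        | succ j => exact ⟨j, rfl⟩
      obtain ⟨y, hyc, hty⟩ := tau_surj hw hr
      refine ⟨j + 1, y, hyc, ?_⟩
      show c * ((j+1 : ℕ) : Ordinal) + tau c y = z
      rw [hty, ← hk, hdm]

end Stmt5Aux

namespace Stmt5Aux

variable {c : Ordinal}

theorem accPt_FF (hw : omega0 ≤ c) {T E : Set Ordinal} {n : ℕ}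
    (hE : ∀ y ∈ T, y < c → FF c n y ∈ E) {p : Ordinal} (hpc : p ≤ c)
    (hp : AccPt p (𝓟 T)) : AccPt (c * (n : Ordinal) + p) (𝓟 E) := by
  have hlim : Order.IsSuccLimit p := Ordinal.IsAcc.isSuccLimit hp
  have h0p : 0 < p := hlim.pos
  refine (Ordinal.isAcc_iff _ _).2 ⟨?_, ?_⟩
  · intro h0
    have hpos : 0 < c * (n : Ordinal) + p := lt_of_lt_of_le h0p (le_add_self)
    exact hpos.ne' h0
  · intro q hq
    have hlp : q - c * (n : Ordinal) < p := by
      rcases le_or_gt (c * (n : Ordinal)) q with h | h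
      · have he : c * (n : Ordinal) + (q - c * (n : Ordinal)) = q :=
          Ordinal.add_sub_cancel_of_le h
        rw [← he] at hq
        exact (add_lt_add_iff_left _).1 hq
      · have he : q - c * (n : Ordinal) = 0 := Ordinal.sub_eq_zero_iff_le.2 h.le
        rw [he]; exact h0p
    obtain ⟨y, hyT, hy1, hy2⟩ := (Ordinal.IsAcc.forall_lt hp) _ hlp
    have hyc : y < c := lt_of_lt_of_le hy2 hpc
    have hb := FF_bounds hw hyc n
    refine ⟨FF c n y, hE y hyT hyc, ?_, ?_⟩
    · have h1 : q ≤ c * (n : Ordinal) + (q - c * (n : Ordinal)) := by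
        rcases le_or_gt (c * (n : Ordinal)) q with h | h
        · exact (Ordinal.add_sub_cancel_of_le h).ge
        · exact h.le.trans (le_self_add)
      exact lt_of_le_of_lt h1 (lt_of_lt_of_le (add_lt_add_right hy1 _) hb.1)
    · have hsucc : y + 1 < p := by
        rw [Ordinal.add_one_eq_succ]; exact hlim.succ_lt hy2
      exact lt_of_le_of_lt hb.2 (add_lt_add_right hsucc _)

theorem acc_decomp (hw : omega0 ≤ c) {E : Set Ordinal} {T : ℕ → Set Ordinal}
    (hE : ∀ z ∈ E, ∃ (m : ℕ) (y : Ordinal), y ∈ T m ∧ y ≤ c ∧ FF c m y = z)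
    {q : Ordinal} (hq : AccPt q (𝓟 E)) (hlt : q < c * omega0) :
    ∃ (n : ℕ) (r : Ordinal), 0 < r ∧ r ≤ c ∧ q = c * (n : Ordinal) + r ∧
      AccPt r (𝓟 (T n)) := by
  have hc : 0 < c := omega0_pos.trans_le hw
  have hqlim : Order.IsSuccLimit q := Ordinal.IsAcc.isSuccLimit hq
  have hdm : c * (q / c) + q % c = q := div_add_mod q c
  have hqo : q / c < omega0 := (div_lt hc.ne').2 hlt
  obtain ⟨k, hk⟩ := lt_omega0.1 hqo
  have key : ∃ (n : ℕ) (r : Ordinal), 0 < r ∧ r ≤ c ∧ q = c * (n : Ordinal) + r := by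
    rcases eq_or_ne (q % c) 0 with h0 | h0
    · have hqe : q = c * ((k : ℕ) : Ordinal) := by rw [← hdm, h0, add_zero, hk]
      obtain ⟨j, rfl⟩ : ∃ j, k = j + 1 := by
        cases k with
        | zero =>
          exfalso
          rw [Nat.cast_zero, mul_zero] at hqe
          exact hqlim.pos.ne' hqe
        | succ j => exact ⟨j, rfl⟩
      refine ⟨j, c, hc, le_rfl, ?_⟩
      rw [hqe, Nat.cast_succ, mul_add_one]
    · exact ⟨k, q % c, pos_iff_ne_zero.2 h0, (mod_lt q hc.ne').le, by rw [hk] at hdm; exact hdm.symm⟩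
  obtain ⟨n, r, hr0, hrc, hqe⟩ := key
  refine ⟨n, r, hr0, hrc, hqe, ?_⟩
  have hrlim : Order.IsSuccLimit r := by
    rcases zero_or_succ_or_isSuccLimit r with h | ⟨s, hs⟩ | h
    · exact absurd h hr0.ne'
    · exfalso
      have he : q = Order.succ (c * (n : Ordinal) + s) := by rw [hqe, ← hs, add_succ]
      have h2 : c * (n : Ordinal) + s < q := by rw [he]; exact Order.lt_succ _
      exact absurd (he ▸ hqlim.succ_lt h2) (lt_irrefl _)
    · exact h
  refine (Ordinal.isAcc_iff _ _).2 ⟨hr0.ne', ?_⟩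
  intro l hl
  have hl1 : l + 1 < r := by rw [Ordinal.add_one_eq_succ]; exact hrlim.succ_lt hl
  have hql : c * (n : Ordinal) + (l + 1) < q := by rw [hqe]; exact add_lt_add_right hl1 _
  obtain ⟨z, hzE, hz1, hz2⟩ := (Ordinal.IsAcc.forall_lt hq) _ hql
  obtain ⟨m, y, hyT, hyc, hFF⟩ := hE z hzE
  have hb1 : c * (n : Ordinal) < z := lt_of_le_of_lt (le_self_add) hz1
  have hb2 : z < c * (n : Ordinal) + c := lt_of_lt_of_le (hqe ▸ hz2) (add_le_add_right hrc _)
  obtain ⟨hmn, hyc', hzb1, hzb2⟩ := FF_loc hw hyc hFF hb1 hb2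
  rw [hmn] at hyT
  have hly : l < y := by
    have h3 : c * (n : Ordinal) + (l + 1) < c * (n : Ordinal) + (y + 1) :=
      lt_of_lt_of_le hz1 hzb2
    have h4 : l + 1 < y + 1 := (add_lt_add_iff_left _).1 h3
    rw [Ordinal.add_one_eq_succ, Ordinal.add_one_eq_succ] at h4
    exact Order.succ_lt_succ_iff.1 h4
  have hyr : y < r := by
    have h5 : c * (n : Ordinal) + y < c * (n : Ordinal) + r := lt_of_le_of_lt hzb1 (hqe ▸ hz2)
    exact (add_lt_add_iff_left _).1 h5
  exact ⟨y, hyT, hly, hyr⟩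

end Stmt5Aux

namespace Stmt5Aux

theorem core (c C : Ordinal) (hw : omega0 ≤ c) (hC : C = c * omega0) :
    ∃ f : (ℕ × ↥(Iic c)) ≃ ↥(Iic C),
      ∀ A : Set (ℕ × ↥(Iic c)),
        (({n : ℕ | {y : ↥(Iic c) | (n, y) ∈ A}.Infinite}.Finite ∧
            ∀ n : ℕ, (derivSet {y : ↥(Iic c) | (n, y) ∈ A}).Finite)
          ↔ (derivSet (f '' A)).Finite) := by
  subst hC
  have hc : 0 < c := omega0_pos.trans_le hw
  have hginj : Function.Injective
      (fun p : ℕ × ↥(Iic c) => (⟨FF c p.1 p.2, FF_le hw p.1 p.2.2⟩ : ↥(Iic (c * omega0)))) := by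
    rintro ⟨n, y⟩ ⟨m, z⟩ h
    have h' : FF c n y = FF c m z := congrArg Subtype.val h
    obtain ⟨h1, h2⟩ := FF_inj hw y.2 z.2 h'
    simp only [Prod.mk.injEq]
    exact ⟨h1, Subtype.ext h2⟩
  have hgsurj : Function.Surjective
      (fun p : ℕ × ↥(Iic c) => (⟨FF c p.1 p.2, FF_le hw p.1 p.2.2⟩ : ↥(Iic (c * omega0)))) := by
    rintro ⟨z, hz⟩
    obtain ⟨n, y, hyc, hFF⟩ := FF_surj hw hz
    exact ⟨(n, ⟨y, hyc⟩), Subtype.ext hFF⟩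
  refine ⟨Equiv.ofBijective _ ⟨hginj, hgsurj⟩, fun A => ?_⟩
  set f := Equiv.ofBijective _ ⟨hginj, hgsurj⟩ with hfdef
  set Fib : ℕ → Set ↥(Iic c) := fun n => {y | (n, y) ∈ A} with hFib
  set T : ℕ → Set Ordinal := fun n => Subtype.val '' Fib n with hTdef
  set E : Set Ordinal := Subtype.val '' (f '' A) with hEdef
  have hTc : ∀ n, T n ⊆ Iic c := by rintro n _ ⟨y, -, rfl⟩; exact y.2
  have hE1 : ∀ n, ∀ y ∈ T n, y < c → FF c n y ∈ E := by
    rintro n _ ⟨y, hyA, rfl⟩ _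
    exact ⟨f (n, y), mem_image_of_mem _ (show (n, y) ∈ A from hyA), rfl⟩
  have hE2 : ∀ z ∈ E, ∃ (m : ℕ) (y : Ordinal), y ∈ T m ∧ y ≤ c ∧ FF c m y = z := by
    rintro _ ⟨w, ⟨⟨m, u⟩, huA, rfl⟩, rfl⟩
    exact ⟨m, u.1, ⟨u, huA, rfl⟩, u.2, rfl⟩
  have hEc : E ⊆ Iic (c * omega0) := by rintro _ ⟨w, -, rfl⟩; exact w.2
  have hDer : ∀ n, (derivSet (Fib n)).Finite ↔ {q | AccPt q (𝓟 (T n))}.Finite :=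
    fun n => derivSet_finite_iff
  have hDerA : (derivSet (f '' A)).Finite ↔ {q | AccPt q (𝓟 E)}.Finite :=
    derivSet_finite_iff
  constructor
  · rintro ⟨hN, hconv⟩
    refine hDerA.2 ?_
    have hsub : {q | AccPt q (𝓟 E)} ⊆
        insert (c * omega0) (⋃ n ∈ {n : ℕ | (Fib n).Infinite},
          (fun r => c * (n : Ordinal) + r) '' {r | AccPt r (𝓟 (T n))}) := by
      intro q hq
      rcases eq_or_ne q (c * omega0) with rfl | hne
      · exact mem_insert _ _
      · have hqlt : q < c * omega0 := lt_of_le_of_ne (acc_le hEc hq) hne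
        obtain ⟨n, r, hr0, hrc, rfl, hracc⟩ := acc_decomp hw hE2 hq hqlt
        have hnN : (Fib n).Infinite := by
          by_contra hfin
          rw [Set.not_infinite] at hfin
          exact not_accPt_of_finite (hfin.image _) r hracc
        exact mem_insert_of_mem _ (mem_biUnion hnN ⟨r, hracc, rfl⟩)
    exact Set.Finite.subset
      ((Set.Finite.biUnion hN (fun n _ => ((hDer n).1 (hconv n)).image _)).insert _) hsub
  · intro hD
    have hDacc : {q | AccPt q (𝓟 E)}.Finite := hDerA.1 hD
    constructor
    · by_contra hN
      have hN' : {n : ℕ | (Fib n).Infinite}.Infinite := hN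
      set N := {n : ℕ | (Fib n).Infinite} with hNdef
      have hch : ∀ n : N, ∃ p, p ≤ c ∧ AccPt p (𝓟 (T n)) := by
        rintro ⟨n, hn⟩
        exact exists_acc_of_infinite (hTc n) (hn.image Subtype.val_injective.injOn)
      choose p hpc hpa using hch
      have hmap : ∀ n : N, c * ((n : ℕ) : Ordinal) + p n ∈ {q | AccPt q (𝓟 E)} :=
        fun n => accPt_FF hw (hE1 n) (hpc n) (hpa n)
      have hlt : ∀ m n : N, (m : ℕ) < (n : ℕ) →
          c * ((m : ℕ) : Ordinal) + p m < c * ((n : ℕ) : Ordinal) + p n := by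
        intro m n hmn
        have h1 : c * ((m : ℕ) : Ordinal) + p m ≤ c * ((m : ℕ) : Ordinal) + c :=
          add_le_add_right (hpc m) _
        have h3 : c * ((m : ℕ) : Ordinal) + c ≤ c * ((n : ℕ) : Ordinal) := by
          rw [← mul_add_one]
          refine mul_le_mul_right ?_ c
          have e : ((m : ℕ) : Ordinal) + 1 = (((m : ℕ) + 1 : ℕ) : Ordinal) := by push_cast; rfl
          rw [e]
          exact_mod_cast hmn
        have h4 : c * ((n : ℕ) : Ordinal) < c * ((n : ℕ) : Ordinal) + p n := by
          have h0 : 0 < p n := Ordinal.IsAcc.pos (hpa n)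
          calc c * ((n : ℕ) : Ordinal) = c * ((n : ℕ) : Ordinal) + 0 := (add_zero _).symm
            _ < c * ((n : ℕ) : Ordinal) + p n := add_lt_add_right h0 _
        exact lt_of_le_of_lt (h1.trans h3) h4
      have hinj : Function.Injective (fun n : N => c * ((n : ℕ) : Ordinal) + p n) := by
        intro m n h
        rcases lt_trichotomy (m : ℕ) (n : ℕ) with h' | h' | h'
        · exact absurd h (hlt m n h').ne
        · exact Subtype.ext h'
        · exact absurd h.symm (hlt n m h').ne
      have : Infinite N := Set.infinite_coe_iff.2 hN'
      exact absurd (Set.Finite.subset hDacc (range_subset_iff.2 hmap))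
        (Set.infinite_range_of_injective hinj)
    · intro n
      refine (hDer n).2 ?_
      have hsub : {r | AccPt r (𝓟 (T n))} ⊆
          (fun r => c * ((n : ℕ) : Ordinal) + r) ⁻¹' {q | AccPt q (𝓟 E)} := by
        intro r hr
        exact accPt_FF hw (hE1 n) (acc_le (hTc n) hr) hr
      have hai : Function.Injective (fun r : Ordinal => c * ((n : ℕ) : Ordinal) + r) :=
        fun x y h =>
          le_antisymm ((add_le_add_iff_left _).1 h.le) ((add_le_add_iff_left _).1 h.ge)
      exact Set.Finite.subset (Set.Finite.preimage hai.injOn hDacc) hsub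

end Stmt5Aux


/-- `conv_{a+1}` is isomorphic to `(Fin ⊗ Fin(ω^a+1)) ∩ ({∅} ⊗ conv_a)` on `ω × (ω^a+1)`. -/

theorem stmt5 (a : Ordinal) (ha : 2 ≤ a) (hac : a.card ≤ Cardinal.aleph0) :
    ∃ f : (ℕ × OrdSpace a) ≃ OrdSpace (a + 1),
      ∀ A : Set (ℕ × OrdSpace a),
        (({n : ℕ | {y : OrdSpace a | (n, y) ∈ A}.Infinite}.Finite ∧
            ∀ n : ℕ, {y : OrdSpace a | (n, y) ∈ A} ∈ convIdeal a)
          ↔ (f '' A) ∈ convIdeal (a + 1)) := by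
  have hw : omega0 ≤ omega0 ^ a := by
    calc omega0 = omega0 ^ (1 : Ordinal) := (opow_one _).symm
      _ ≤ omega0 ^ a := opow_le_opow_right omega0_pos (le_trans one_le_two ha)
  have hC : omega0 ^ (a + 1) = omega0 ^ a * omega0 := by
    rw [opow_add, opow_one]
  obtain ⟨f, hf⟩ := Stmt5Aux.core (omega0 ^ a) (omega0 ^ (a + 1)) hw hC
  refine ⟨f, fun A => ?_⟩
  simpa only [convIdeal, mem_setOf_eq] using hf A
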